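/- Let Q be a generalised quadrangle with point-line incidence graph Γ and let C be a code in Γ with |C| ≥ 2, minimum distance δ = 4 and covering radius ρ. Then: (1) C is a partial ovoid or a partial spread of Q; (2) C is a maximal partial ovoid or a maximal partial spread of Q if and only if ρ ≤ 3; (3) C is an ovoid or a spread of Q if and only if ρ = 2. -/

import Mathlib

/-- A finite generalised quadrangle of order `(s,t)`: each point is on `t+1` lines,
each line has `s+1` points, two distinct points lie on at most one common line,
two distinct lines meet in at most one common point, and for each non-incident
point-line pair `(p, ℓ)` there is a unique pair `(q, M)` with `p I M`, `q I M`
and `q I ℓ`. -/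
structure GenQuad (P L : Type*) (s t : ℕ) where
  I : P → L → Prop
  point_deg : ∀ p : P, Nat.card {ℓ : L // I p ℓ} = t + 1
  line_deg : ∀ ℓ : L, Nat.card {p : P // I p ℓ} = s + 1
  points_one_line : ∀ p₁ p₂ : P, p₁ ≠ p₂ → ∀ ℓ₁ ℓ₂ : L,
    I p₁ ℓ₁ → I p₂ ℓ₁ → I p₁ ℓ₂ → I p₂ ℓ₂ → ℓ₁ = ℓ₂
  lines_one_point : ∀ ℓ₁ ℓ₂ : L, ℓ₁ ≠ ℓ₂ → ∀ p₁ p₂ : P,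
    I p₁ ℓ₁ → I p₁ ℓ₂ → I p₂ ℓ₁ → I p₂ ℓ₂ → p₁ = p₂
  gq_axiom : ∀ (p : P) (ℓ : L), ¬ I p ℓ →
    ∃! qM : P × L, I p qM.2 ∧ I qM.1 qM.2 ∧ I qM.1 ℓ

/-- The point-line incidence graph of a generalised quadrangle. -/
def incGraph {P L : Type*} {s t : ℕ} (Q : GenQuad P L s t) : SimpleGraph (P ⊕ L) where
  Adj x y :=
    (∃ p ℓ, x = Sum.inl p ∧ y = Sum.inr ℓ ∧ Q.I p ℓ) ∨
    (∃ p ℓ, x = Sum.inr ℓ ∧ y = Sum.inl p ∧ Q.I p ℓ)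
  symm := by
    constructor
    rintro x y (⟨p, ℓ, rfl, rfl, h⟩ | ⟨p, ℓ, rfl, rfl, h⟩)
    · exact Or.inr ⟨p, ℓ, rfl, rfl, h⟩
    · exact Or.inl ⟨p, ℓ, rfl, rfl, h⟩
  loopless := by
    constructor
    rintro x (⟨p, ℓ, rfl, h, -⟩ | ⟨p, ℓ, rfl, h, -⟩) <;> exact absurd h (by simp)

/-- The minimum distance of a code `C` in a graph `Γ`. -/
noncomputable def minDist {V : Type*} (Γ : SimpleGraph V) (C : Set V) : ℕ :=
  sInf {d | ∃ x ∈ C, ∃ y ∈ C, x ≠ y ∧ Γ.dist x y = d}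

/-- The distance from a vertex `γ` to a code `C`. -/
noncomputable def distToCode {V : Type*} (Γ : SimpleGraph V) (C : Set V) (γ : V) : ℕ :=
  sInf {d | ∃ x ∈ C, Γ.dist γ x = d}

/-- The covering radius of a code `C` in a graph `Γ`. -/
noncomputable def covRad {V : Type*} (Γ : SimpleGraph V) (C : Set V) : ℕ :=
  sSup {d | ∃ γ : V, distToCode Γ C γ = d}

/-- `nbhd Γ C i` is the set `C_i` of vertices at distance exactly `i` from `C`. -/
def nbhd {V : Type*} (Γ : SimpleGraph V) (C : Set V) (i : ℕ) : Set V :=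
  {γ | distToCode Γ C γ = i}

/-- `g` is an automorphism of the graph `Γ`. -/
def IsGraphAut {V : Type*} (Γ : SimpleGraph V) (g : V ≃ V) : Prop :=
  ∀ x y : V, Γ.Adj (g x) (g y) ↔ Γ.Adj x y

/-- `Aut(C)` (automorphisms of `Γ` preserving `C` setwise) acts transitively on `S`. -/
def TransOn {V : Type*} (Γ : SimpleGraph V) (C S : Set V) : Prop :=
  ∀ x ∈ S, ∀ y ∈ S, ∃ g : V ≃ V, IsGraphAut Γ g ∧ (∀ v, g v ∈ C ↔ v ∈ C) ∧ g x = y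

/-- `C` is neighbour-transitive: `Aut(C)` is transitive on `C` and on `C₁`. -/
def NeighbourTransitive {V : Type*} (Γ : SimpleGraph V) (C : Set V) : Prop :=
  TransOn Γ C C ∧ TransOn Γ C (nbhd Γ C 1)

variable {P L : Type*} {s t : ℕ}

/-- A partial ovoid: a set of point-vertices no two of which lie on a common line. -/
def IsPartialOvoid (Q : GenQuad P L s t) (C : Set (P ⊕ L)) : Prop :=
  (∀ x ∈ C, ∃ p : P, x = Sum.inl p) ∧
  ∀ p₁ p₂ : P, Sum.inl p₁ ∈ C → Sum.inl p₂ ∈ C → p₁ ≠ p₂ →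
    ∀ ℓ : L, ¬ (Q.I p₁ ℓ ∧ Q.I p₂ ℓ)

/-- A maximal partial ovoid: a partial ovoid not properly contained in a larger one. -/
def IsMaxPartialOvoid (Q : GenQuad P L s t) (C : Set (P ⊕ L)) : Prop :=
  IsPartialOvoid Q C ∧ ∀ C', IsPartialOvoid Q C' → C ⊆ C' → C' = C

/-- An ovoid: a set of point-vertices such that every line contains exactly one of them. -/
def IsOvoid (Q : GenQuad P L s t) (C : Set (P ⊕ L)) : Prop :=
  (∀ x ∈ C, ∃ p : P, x = Sum.inl p) ∧
  ∀ ℓ : L, ∃! p : P, Sum.inl p ∈ C ∧ Q.I p ℓ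

/-- A partial spread: a set of line-vertices no two of which pass through a common point. -/
def IsPartialSpread (Q : GenQuad P L s t) (C : Set (P ⊕ L)) : Prop :=
  (∀ x ∈ C, ∃ ℓ : L, x = Sum.inr ℓ) ∧
  ∀ ℓ₁ ℓ₂ : L, Sum.inr ℓ₁ ∈ C → Sum.inr ℓ₂ ∈ C → ℓ₁ ≠ ℓ₂ →
    ∀ p : P, ¬ (Q.I p ℓ₁ ∧ Q.I p ℓ₂)

/-- A maximal partial spread: a partial spread not properly contained in a larger one. -/
def IsMaxPartialSpread (Q : GenQuad P L s t) (C : Set (P ⊕ L)) : Prop :=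
  IsPartialSpread Q C ∧ ∀ C', IsPartialSpread Q C' → C ⊆ C' → C' = C

/-- A spread: a set of line-vertices such that every point lies on exactly one of them. -/
def IsSpread (Q : GenQuad P L s t) (C : Set (P ⊕ L)) : Prop :=
  (∀ x ∈ C, ∃ ℓ : L, x = Sum.inr ℓ) ∧
  ∀ p : P, ∃! ℓ : L, Sum.inr ℓ ∈ C ∧ Q.I p ℓ

section Aux

open SimpleGraph Sum

variable {P L : Type*} {s t : ℕ} (Q : GenQuad P L s t)

lemma adj_iff' {p : P} {ℓ : L} : (incGraph Q).Adj (inl p) (inr ℓ) ↔ Q.I p ℓ := by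
  constructor
  · rintro (⟨p', ℓ', h1, h2, h3⟩ | ⟨p', ℓ', h1, h2, h3⟩) <;> simp_all
  · intro h; exact Or.inl ⟨p, ℓ, rfl, rfl, h⟩

lemma not_adj_inl_inl' {p q : P} : ¬ (incGraph Q).Adj (inl p) (inl q) := by
  rintro (⟨p', ℓ', h1, h2, h3⟩ | ⟨p', ℓ', h1, h2, h3⟩) <;> simp_all

lemma not_adj_inr_inr' {ℓ m : L} : ¬ (incGraph Q).Adj (inr ℓ) (inr m) := by
  rintro (⟨p', ℓ', h1, h2, h3⟩ | ⟨p', ℓ', h1, h2, h3⟩) <;> simp_all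

lemma adj_isLeft' {x y : P ⊕ L} (h : (incGraph Q).Adj x y) : x.isLeft ≠ y.isLeft := by
  rcases h with ⟨p, ℓ, rfl, rfl, -⟩ | ⟨p, ℓ, rfl, rfl, -⟩ <;> simp

lemma walk_parity' {x y : P ⊕ L} (w : (incGraph Q).Walk x y) :
    (x.isLeft = y.isLeft) ↔ Even w.length := by
  induction w with
  | nil => simp
  | @cons a b c h w ih =>
    have hab := adj_isLeft' Q h
    simp only [Walk.length_cons, Nat.even_add_one, ← ih]
    cases ha : a.isLeft <;> cases hb : b.isLeft <;> cases hc : c.isLeft <;> simp_all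

lemma dist_parity' {x y : P ⊕ L} (hr : (incGraph Q).Reachable x y) :
    (x.isLeft = y.isLeft) ↔ Even ((incGraph Q).dist x y) := by
  obtain ⟨w, hw⟩ := hr.exists_walk_length_eq_dist
  rw [← hw]; exact walk_parity' Q w

lemma exists_line' (p : P) : ∃ ℓ : L, Q.I p ℓ := by
  by_contra h
  push_neg at h
  have he : IsEmpty {ℓ : L // Q.I p ℓ} := ⟨fun x => h x.1 x.2⟩
  have := Q.point_deg p
  rw [Nat.card_of_isEmpty] at this
  omega

lemma exists_point' (ℓ : L) : ∃ p : P, Q.I p ℓ := by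
  by_contra h
  push_neg at h
  have he : IsEmpty {p : P // Q.I p ℓ} := ⟨fun x => h x.1 x.2⟩
  have := Q.line_deg ℓ
  rw [Nat.card_of_isEmpty] at this
  omega

lemma exists_mid' {V : Type*} {G : SimpleGraph V} {x y : V} (h : G.dist x y = 2) :
    ∃ z, G.Adj x z ∧ G.Adj z y := by
  obtain ⟨w, hw⟩ := SimpleGraph.exists_walk_of_dist_ne_zero (G := G) (u := x) (v := y)
    (by rw [h]; omega)
  rw [h] at hw
  refine ⟨w.getVert 1, ?_, ?_⟩
  · have := w.adj_getVert_succ (i := 0) (by omega)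
    simpa using this
  · have := w.adj_getVert_succ (i := 1) (by omega)
    have h2 : w.getVert 2 = y := by rw [← hw]; exact w.getVert_length
    rwa [h2] at this

lemma dist_inc' {p : P} {ℓ : L} (h : Q.I p ℓ) :
    (incGraph Q).dist (inl p) (inr ℓ) = 1 :=
  SimpleGraph.dist_eq_one_iff_adj.mpr ((adj_iff' Q).mpr h)

lemma dist_not_inc' {p : P} {ℓ : L} (h : ¬ Q.I p ℓ) :
    (incGraph Q).dist (inl p) (inr ℓ) = 3 := by
  obtain ⟨⟨q, M⟩, ⟨h1, h2, h3⟩, -⟩ := Q.gq_axiom p ℓ h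
  let w : (incGraph Q).Walk (inl p) (inr ℓ) :=
    .cons ((adj_iff' Q).mpr h1) (.cons ((adj_iff' Q).mpr h2).symm
      (.cons ((adj_iff' Q).mpr h3) .nil))
  have hle : (incGraph Q).dist (inl p) (inr ℓ) ≤ 3 := by
    exact SimpleGraph.dist_le w
  have hodd : ¬ Even ((incGraph Q).dist (inl p) (inr ℓ)) := by
    rw [← dist_parity' Q ⟨w⟩]; simp
  have hne1 : (incGraph Q).dist (inl p) (inr ℓ) ≠ 1 :=
    fun h' => h ((adj_iff' Q).mp (SimpleGraph.dist_eq_one_iff_adj.mp h'))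
  rw [Nat.not_even_iff] at hodd
  omega

lemma dist_coll' {p q : P} {ℓ : L} (hpq : p ≠ q) (h1 : Q.I p ℓ) (h2 : Q.I q ℓ) :
    (incGraph Q).dist (inl p) (inl q) = 2 := by
  let w : (incGraph Q).Walk (inl p) (inl q) :=
    .cons ((adj_iff' Q).mpr h1) (.cons ((adj_iff' Q).mpr h2).symm .nil)
  have hle : (incGraph Q).dist (inl p) (inl q) ≤ 2 := by
    exact SimpleGraph.dist_le w
  have heven : Even ((incGraph Q).dist (inl p) (inl q)) := by
    rw [← dist_parity' Q ⟨w⟩]; rfl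
  have hne0 : (incGraph Q).dist (inl p) (inl q) ≠ 0 := by
    intro h0
    exact hpq (inl_injective ((Reachable.dist_eq_zero_iff ⟨w⟩).mp h0))
  rw [Nat.even_iff] at heven
  omega

lemma dist_noncoll' {p q : P} (hpq : p ≠ q) (h : ∀ ℓ : L, ¬ (Q.I p ℓ ∧ Q.I q ℓ)) :
    (incGraph Q).dist (inl p) (inl q) = 4 := by
  obtain ⟨ℓ, hℓ⟩ := exists_line' Q q
  have hpℓ : ¬ Q.I p ℓ := fun hp => h ℓ ⟨hp, hℓ⟩
  obtain ⟨⟨q', M⟩, ⟨h1, h2, h3⟩, -⟩ := Q.gq_axiom p ℓ hpℓ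
  let w : (incGraph Q).Walk (inl p) (inl q) :=
    .cons ((adj_iff' Q).mpr h1) (.cons ((adj_iff' Q).mpr h2).symm
      (.cons ((adj_iff' Q).mpr h3) (.cons ((adj_iff' Q).mpr hℓ).symm .nil)))
  have hle : (incGraph Q).dist (inl p) (inl q) ≤ 4 := by
    exact SimpleGraph.dist_le w
  have heven : Even ((incGraph Q).dist (inl p) (inl q)) := by
    rw [← dist_parity' Q ⟨w⟩]; rfl
  have hne0 : (incGraph Q).dist (inl p) (inl q) ≠ 0 := by
    intro h0
    exact hpq (inl_injective ((Reachable.dist_eq_zero_iff ⟨w⟩).mp h0))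
  have hne2 : (incGraph Q).dist (inl p) (inl q) ≠ 2 := by
    intro h2'
    obtain ⟨z, hz1, hz2⟩ := exists_mid' h2'
    cases z with
    | inl r => exact not_adj_inl_inl' Q hz1
    | inr m =>
      exact h m ⟨(adj_iff' Q).mp hz1, (adj_iff' Q).mp hz2.symm⟩
  rw [Nat.even_iff] at heven
  omega

lemma dist_conc' {ℓ m : L} {q : P} (hlm : ℓ ≠ m) (h1 : Q.I q ℓ) (h2 : Q.I q m) :
    (incGraph Q).dist (inr ℓ) (inr m) = 2 := by
  let w : (incGraph Q).Walk (inr ℓ : P ⊕ L) (inr m) :=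
    .cons ((adj_iff' Q).mpr h1).symm (.cons ((adj_iff' Q).mpr h2) .nil)
  have hle : (incGraph Q).dist (inr ℓ : P ⊕ L) (inr m) ≤ 2 := by
    exact SimpleGraph.dist_le w
  have heven : Even ((incGraph Q).dist (inr ℓ : P ⊕ L) (inr m)) := by
    rw [← dist_parity' Q ⟨w⟩]; rfl
  have hne0 : (incGraph Q).dist (inr ℓ : P ⊕ L) (inr m) ≠ 0 := by
    intro h0
    exact hlm (inr_injective ((Reachable.dist_eq_zero_iff ⟨w⟩).mp h0))
  rw [Nat.even_iff] at heven
  omega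

lemma dist_nonconc' {ℓ m : L} (hlm : ℓ ≠ m) (h : ∀ q : P, ¬ (Q.I q ℓ ∧ Q.I q m)) :
    (incGraph Q).dist (inr ℓ) (inr m) = 4 := by
  obtain ⟨q, hq⟩ := exists_point' Q m
  have hqℓ : ¬ Q.I q ℓ := fun hq' => h q ⟨hq', hq⟩
  obtain ⟨⟨x, M⟩, ⟨h1, h2, h3⟩, -⟩ := Q.gq_axiom q ℓ hqℓ
  let w : (incGraph Q).Walk (inr ℓ : P ⊕ L) (inr m) :=
    .cons ((adj_iff' Q).mpr h3).symm (.cons ((adj_iff' Q).mpr h2)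
      (.cons ((adj_iff' Q).mpr h1).symm (.cons ((adj_iff' Q).mpr hq) .nil)))
  have hle : (incGraph Q).dist (inr ℓ : P ⊕ L) (inr m) ≤ 4 := by
    exact SimpleGraph.dist_le w
  have heven : Even ((incGraph Q).dist (inr ℓ : P ⊕ L) (inr m)) := by
    rw [← dist_parity' Q ⟨w⟩]; rfl
  have hne0 : (incGraph Q).dist (inr ℓ : P ⊕ L) (inr m) ≠ 0 := by
    intro h0
    exact hlm (inr_injective ((Reachable.dist_eq_zero_iff ⟨w⟩).mp h0))
  have hne2 : (incGraph Q).dist (inr ℓ : P ⊕ L) (inr m) ≠ 2 := by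
    intro h2'
    obtain ⟨z, hz1, hz2⟩ := exists_mid' h2'
    cases z with
    | inr r => exact not_adj_inr_inr' Q hz1
    | inl r =>
      exact h r ⟨(adj_iff' Q).mp hz1.symm, (adj_iff' Q).mp hz2⟩
  rw [Nat.even_iff] at heven
  omega

lemma distToCode_le' {V : Type*} (Γ : SimpleGraph V) (C : Set V) (γ : V) {x : V}
    (hx : x ∈ C) : distToCode Γ C γ ≤ Γ.dist γ x :=
  Nat.sInf_le ⟨x, hx, rfl⟩

lemma distToCode_spec' {V : Type*} (Γ : SimpleGraph V) (C : Set V) (γ : V)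
    (hC : C.Nonempty) : ∃ x ∈ C, Γ.dist γ x = distToCode Γ C γ := by
  obtain ⟨x, hx⟩ := hC
  have hne : {d | ∃ x ∈ C, Γ.dist γ x = d}.Nonempty := ⟨Γ.dist γ x, x, hx, rfl⟩
  exact Nat.sInf_mem hne

lemma distToCode_le_covRad' {V : Type*} [Finite V] (Γ : SimpleGraph V) (C : Set V)
    (γ : V) : distToCode Γ C γ ≤ covRad Γ C := by
  apply le_csSup
  · exact (Set.finite_range (distToCode Γ C)).bddAbove
  · exact ⟨γ, rfl⟩

lemma covRad_le' {V : Type*} (Γ : SimpleGraph V) (C : Set V) {n : ℕ}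
    (h : ∀ γ : V, distToCode Γ C γ ≤ n) : covRad Γ C ≤ n := by
  apply csSup_le'
  rintro d ⟨γ, rfl⟩
  exact h γ

end Aux

section Main

open SimpleGraph Sum

variable {P L : Type*} {s t : ℕ}

lemma main_ovoid [Finite P] [Finite L] (Q : GenQuad P L s t) (hs : 1 ≤ s)
    (C : Set (P ⊕ L)) (hC2 : 2 ≤ C.ncard)
    (hd4 : ∀ x ∈ C, ∀ y ∈ C, x ≠ y → 4 ≤ (incGraph Q).dist x y)
    (hP : ∀ x ∈ C, ∃ p : P, x = inl p) :
    IsPartialOvoid Q C ∧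
    (IsMaxPartialOvoid Q C ↔ covRad (incGraph Q) C ≤ 3) ∧
    (IsOvoid Q C ↔ covRad (incGraph Q) C = 2) := by
  classical
  have hne : C.Nonempty := by
    rcases C.eq_empty_or_nonempty with rfl | h
    · simp at hC2
    · exact h
  obtain ⟨x₀, hx₀⟩ := hne
  obtain ⟨p₀, rfl⟩ := hP x₀ hx₀
  have hpo : IsPartialOvoid Q C := by
    refine ⟨hP, fun p₁ p₂ h1 h2 hne12 ℓ hi => ?_⟩
    have h4 := hd4 _ h1 _ h2 (by simpa using hne12)
    rw [dist_coll' Q hne12 hi.1 hi.2] at h4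
    omega
  have hdle : ∀ γ : P ⊕ L, ∀ x ∈ C, distToCode (incGraph Q) C γ ≤ (incGraph Q).dist γ x :=
    fun γ x hx => distToCode_le' _ _ _ hx
  have hspec : ∀ γ : P ⊕ L, ∃ x ∈ C, (incGraph Q).dist γ x = distToCode (incGraph Q) C γ :=
    fun γ => distToCode_spec' _ _ _ ⟨_, hx₀⟩
  have hline3 : ∀ ℓ : L, distToCode (incGraph Q) C (inr ℓ) ≤ 3 := by
    intro ℓ
    refine le_trans (hdle _ _ hx₀) ?_
    rw [SimpleGraph.dist_comm]
    by_cases h : Q.I p₀ ℓ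
    · rw [dist_inc' Q h]; omega
    · rw [dist_not_inc' Q h]
  refine ⟨hpo, ?_, ?_⟩
  · constructor
    · rintro ⟨-, hmax⟩
      apply covRad_le'
      intro γ
      rcases γ with p | ℓ
      · by_cases hp : inl p ∈ C
        · refine le_trans (hdle _ _ hp) ?_
          rw [SimpleGraph.dist_self]; omega
        · have hclaim : ∃ q : P, inl q ∈ C ∧ q ≠ p ∧ ∃ ℓ : L, Q.I p ℓ ∧ Q.I q ℓ := by
            by_contra hcon
            push_neg at hcon
            have hpo' : IsPartialOvoid Q (insert (inl p) C) := by
              constructor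
              · rintro x hx
                rcases Set.mem_insert_iff.mp hx with rfl | hx
                · exact ⟨p, rfl⟩
                · exact hP x hx
              · intro p₁ p₂ h1 h2 hne12 ℓ hi
                rcases Set.mem_insert_iff.mp h1 with h1' | h1' <;>
                  rcases Set.mem_insert_iff.mp h2 with h2' | h2'
                · simp only [inl.injEq] at h1' h2'
                  exact hne12 (h1'.trans h2'.symm)
                · have hp1 : p₁ = p := by simpa using h1'
                  subst hp1
                  exact hcon p₂ h2' (Ne.symm hne12) ℓ hi.1 hi.2
                · have hp2 : p₂ = p := by simpa using h2'
                  subst hp2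
                  exact hcon p₁ h1' hne12 ℓ hi.2 hi.1
                · exact hpo.2 p₁ p₂ h1' h2' hne12 ℓ hi
            have heq := hmax _ hpo' (Set.subset_insert _ _)
            exact hp (heq ▸ Set.mem_insert (inl p) C)
          obtain ⟨q, hqC, hqp, ℓ, hpℓ, hqℓ⟩ := hclaim
          refine le_trans (hdle _ _ hqC) ?_
          rw [dist_coll' Q (Ne.symm hqp) hpℓ hqℓ]
          omega
      · exact hline3 ℓ
    · intro hρ
      refine ⟨hpo, fun C' hC' hsub => ?_⟩
      apply Set.Subset.antisymm _ hsub
      intro x hx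
      obtain ⟨p, rfl⟩ := hC'.1 x hx
      by_contra hp
      obtain ⟨y, hy, hdy⟩ := hspec (inl p)
      obtain ⟨q, rfl⟩ := hP y hy
      have hpq : p ≠ q := fun h => hp (h ▸ hy)
      have h3 : distToCode (incGraph Q) C (inl p) ≤ 3 :=
        le_trans (distToCode_le_covRad' _ _ _) hρ
      by_cases hcol : ∃ ℓ : L, Q.I p ℓ ∧ Q.I q ℓ
      · obtain ⟨ℓ, i1, i2⟩ := hcol
        exact hC'.2 p q hx (hsub hy) hpq ℓ ⟨i1, i2⟩
      · push_neg at hcol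
        have h4 := dist_noncoll' Q hpq (fun ℓ h => hcol ℓ h.1 h.2)
        omega
  · constructor
    · rintro ⟨-, huniq⟩
      have hub : ∀ γ : P ⊕ L, distToCode (incGraph Q) C γ ≤ 2 := by
        intro γ
        rcases γ with p | ℓ
        · by_cases hp : inl p ∈ C
          · refine le_trans (hdle _ _ hp) ?_
            rw [SimpleGraph.dist_self]; omega
          · obtain ⟨ℓ, hℓ⟩ := exists_line' Q p
            obtain ⟨q, ⟨hqC, hqI⟩, -⟩ := huniq ℓ
            have hpq : p ≠ q := fun h => hp (h ▸ hqC)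
            refine le_trans (hdle _ _ hqC) ?_
            rw [dist_coll' Q hpq hℓ hqI]
        · obtain ⟨q, ⟨hqC, hqI⟩, -⟩ := huniq ℓ
          refine le_trans (hdle _ _ hqC) ?_
          rw [SimpleGraph.dist_comm, dist_inc' Q hqI]
          omega
      obtain ⟨ℓ₀, hp₀ℓ⟩ := exists_line' Q p₀
      have hcard : 1 < Nat.card {r : P // Q.I r ℓ₀} := by rw [Q.line_deg]; omega
      haveI : Nontrivial {r : P // Q.I r ℓ₀} :=
        Finite.one_lt_card_iff_nontrivial.mp hcard
      obtain ⟨r', hr'⟩ := exists_ne (⟨p₀, hp₀ℓ⟩ : {r : P // Q.I r ℓ₀})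
      have hrp : r'.1 ≠ p₀ := fun h => hr' (Subtype.ext h)
      have hrC : inl r'.1 ∉ C := by
        intro hrC
        exact hrp ((huniq ℓ₀).unique ⟨hrC, r'.2⟩ ⟨hx₀, hp₀ℓ⟩)
      have hd2 : distToCode (incGraph Q) C (inl r'.1) = 2 := by
        obtain ⟨y, hy, hdy⟩ := hspec (inl r'.1)
        obtain ⟨q, rfl⟩ := hP y hy
        have hrq : r'.1 ≠ q := fun h => hrC (h ▸ hy)
        have hge : 2 ≤ (incGraph Q).dist (inl r'.1) (inl q) := by
          by_cases hcol : ∃ ℓ : L, Q.I r'.1 ℓ ∧ Q.I q ℓ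
          · obtain ⟨ℓ, i1, i2⟩ := hcol
            rw [dist_coll' Q hrq i1 i2]
          · push_neg at hcol
            rw [dist_noncoll' Q hrq (fun ℓ h => hcol ℓ h.1 h.2)]
            omega
        have hle2 := hub (inl r'.1)
        omega
      apply le_antisymm (covRad_le' _ _ hub)
      calc 2 = distToCode (incGraph Q) C (inl r'.1) := hd2.symm
        _ ≤ covRad (incGraph Q) C := distToCode_le_covRad' _ _ _
    · intro hρ
      refine ⟨hP, fun ℓ => ?_⟩
      have h2 : distToCode (incGraph Q) C (inr ℓ) ≤ 2 :=
        le_trans (distToCode_le_covRad' _ _ _) (le_of_eq hρ)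
      obtain ⟨y, hy, hdy⟩ := hspec (inr ℓ)
      obtain ⟨q, rfl⟩ := hP y hy
      by_cases hI : Q.I q ℓ
      · refine ⟨q, ⟨hy, hI⟩, ?_⟩
        rintro y' ⟨hy', hI'⟩
        by_contra hne'
        exact hpo.2 y' q hy' hy hne' ℓ ⟨hI', hI⟩
      · exfalso
        rw [SimpleGraph.dist_comm, dist_not_inc' Q hI] at hdy
        omega

lemma main_spread [Finite P] [Finite L] (Q : GenQuad P L s t) (ht : 1 ≤ t)
    (C : Set (P ⊕ L)) (hC2 : 2 ≤ C.ncard)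
    (hd4 : ∀ x ∈ C, ∀ y ∈ C, x ≠ y → 4 ≤ (incGraph Q).dist x y)
    (hL : ∀ x ∈ C, ∃ ℓ : L, x = inr ℓ) :
    IsPartialSpread Q C ∧
    (IsMaxPartialSpread Q C ↔ covRad (incGraph Q) C ≤ 3) ∧
    (IsSpread Q C ↔ covRad (incGraph Q) C = 2) := by
  classical
  have hne : C.Nonempty := by
    rcases C.eq_empty_or_nonempty with rfl | h
    · simp at hC2
    · exact h
  obtain ⟨x₀, hx₀⟩ := hne
  obtain ⟨ℓ₀, rfl⟩ := hL x₀ hx₀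
  have hpo : IsPartialSpread Q C := by
    refine ⟨hL, fun ℓ₁ ℓ₂ h1 h2 hne12 q hi => ?_⟩
    have h4 := hd4 _ h1 _ h2 (by simpa using hne12)
    rw [dist_conc' Q hne12 hi.1 hi.2] at h4
    omega
  have hdle : ∀ γ : P ⊕ L, ∀ x ∈ C, distToCode (incGraph Q) C γ ≤ (incGraph Q).dist γ x :=
    fun γ x hx => distToCode_le' _ _ _ hx
  have hspec : ∀ γ : P ⊕ L, ∃ x ∈ C, (incGraph Q).dist γ x = distToCode (incGraph Q) C γ :=
    fun γ => distToCode_spec' _ _ _ ⟨_, hx₀⟩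
  have hpoint3 : ∀ p : P, distToCode (incGraph Q) C (inl p) ≤ 3 := by
    intro p
    refine le_trans (hdle _ _ hx₀) ?_
    by_cases h : Q.I p ℓ₀
    · rw [dist_inc' Q h]; omega
    · rw [dist_not_inc' Q h]
  refine ⟨hpo, ?_, ?_⟩
  · constructor
    · rintro ⟨-, hmax⟩
      apply covRad_le'
      intro γ
      rcases γ with p | ℓ
      · exact hpoint3 p
      · by_cases hp : inr ℓ ∈ C
        · refine le_trans (hdle _ _ hp) ?_
          rw [SimpleGraph.dist_self]; omega
        · have hclaim : ∃ m : L, inr m ∈ C ∧ m ≠ ℓ ∧ ∃ q : P, Q.I q ℓ ∧ Q.I q m := by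
            by_contra hcon
            push_neg at hcon
            have hpo' : IsPartialSpread Q (insert (inr ℓ) C) := by
              constructor
              · rintro x hx
                rcases Set.mem_insert_iff.mp hx with rfl | hx
                · exact ⟨ℓ, rfl⟩
                · exact hL x hx
              · intro ℓ₁ ℓ₂ h1 h2 hne12 q hi
                rcases Set.mem_insert_iff.mp h1 with h1' | h1' <;>
                  rcases Set.mem_insert_iff.mp h2 with h2' | h2'
                · simp only [inr.injEq] at h1' h2'
                  exact hne12 (h1'.trans h2'.symm)
                · have hl1 : ℓ₁ = ℓ := by simpa using h1'
                  subst hl1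
                  exact hcon ℓ₂ h2' (Ne.symm hne12) q hi.1 hi.2
                · have hl2 : ℓ₂ = ℓ := by simpa using h2'
                  subst hl2
                  exact hcon ℓ₁ h1' hne12 q hi.2 hi.1
                · exact hpo.2 ℓ₁ ℓ₂ h1' h2' hne12 q hi
            have heq := hmax _ hpo' (Set.subset_insert _ _)
            exact hp (heq ▸ Set.mem_insert (inr ℓ) C)
          obtain ⟨m, hmC, hmℓ, q, hqℓ, hqm⟩ := hclaim
          refine le_trans (hdle _ _ hmC) ?_
          rw [dist_conc' Q (Ne.symm hmℓ) hqℓ hqm]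
          omega
    · intro hρ
      refine ⟨hpo, fun C' hC' hsub => ?_⟩
      apply Set.Subset.antisymm _ hsub
      intro x hx
      obtain ⟨ℓ, rfl⟩ := hC'.1 x hx
      by_contra hp
      obtain ⟨y, hy, hdy⟩ := hspec (inr ℓ)
      obtain ⟨m, rfl⟩ := hL y hy
      have hlm : ℓ ≠ m := fun h => hp (h ▸ hy)
      have h3 : distToCode (incGraph Q) C (inr ℓ) ≤ 3 :=
        le_trans (distToCode_le_covRad' _ _ _) hρ
      by_cases hcol : ∃ q : P, Q.I q ℓ ∧ Q.I q m
      · obtain ⟨q, i1, i2⟩ := hcol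
        exact hC'.2 ℓ m hx (hsub hy) hlm q ⟨i1, i2⟩
      · push_neg at hcol
        have h4 := dist_nonconc' Q hlm (fun q h => hcol q h.1 h.2)
        omega
  · constructor
    · rintro ⟨-, huniq⟩
      have hub : ∀ γ : P ⊕ L, distToCode (incGraph Q) C γ ≤ 2 := by
        intro γ
        rcases γ with p | ℓ
        · obtain ⟨m, ⟨hmC, hmI⟩, -⟩ := huniq p
          refine le_trans (hdle _ _ hmC) ?_
          rw [dist_inc' Q hmI]
          omega
        · by_cases hp : inr ℓ ∈ C
          · refine le_trans (hdle _ _ hp) ?_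
            rw [SimpleGraph.dist_self]; omega
          · obtain ⟨q, hq⟩ := exists_point' Q ℓ
            obtain ⟨m, ⟨hmC, hmI⟩, -⟩ := huniq q
            have hlm : ℓ ≠ m := fun h => hp (h ▸ hmC)
            refine le_trans (hdle _ _ hmC) ?_
            rw [dist_conc' Q hlm hq hmI]
      obtain ⟨q₀, hq₀ℓ⟩ := exists_point' Q ℓ₀
      have hcard : 1 < Nat.card {m : L // Q.I q₀ m} := by rw [Q.point_deg]; omega
      haveI : Nontrivial {m : L // Q.I q₀ m} :=
        Finite.one_lt_card_iff_nontrivial.mp hcard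
      obtain ⟨r', hr'⟩ := exists_ne (⟨ℓ₀, hq₀ℓ⟩ : {m : L // Q.I q₀ m})
      have hrp : r'.1 ≠ ℓ₀ := fun h => hr' (Subtype.ext h)
      have hrC : inr r'.1 ∉ C := by
        intro hrC
        exact hrp ((huniq q₀).unique ⟨hrC, r'.2⟩ ⟨hx₀, hq₀ℓ⟩)
      have hd2 : distToCode (incGraph Q) C (inr r'.1) = 2 := by
        obtain ⟨y, hy, hdy⟩ := hspec (inr r'.1)
        obtain ⟨m, rfl⟩ := hL y hy
        have hrq : r'.1 ≠ m := fun h => hrC (h ▸ hy)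
        have hge : 2 ≤ (incGraph Q).dist (inr r'.1 : P ⊕ L) (inr m) := by
          by_cases hcol : ∃ q : P, Q.I q r'.1 ∧ Q.I q m
          · obtain ⟨q, i1, i2⟩ := hcol
            rw [dist_conc' Q hrq i1 i2]
          · push_neg at hcol
            rw [dist_nonconc' Q hrq (fun q h => hcol q h.1 h.2)]
            omega
        have hle2 := hub (inr r'.1)
        omega
      apply le_antisymm (covRad_le' _ _ hub)
      calc 2 = distToCode (incGraph Q) C (inr r'.1) := hd2.symm
        _ ≤ covRad (incGraph Q) C := distToCode_le_covRad' _ _ _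
    · intro hρ
      refine ⟨hL, fun p => ?_⟩
      have h2 : distToCode (incGraph Q) C (inl p) ≤ 2 :=
        le_trans (distToCode_le_covRad' _ _ _) (le_of_eq hρ)
      obtain ⟨y, hy, hdy⟩ := hspec (inl p)
      obtain ⟨m, rfl⟩ := hL y hy
      by_cases hI : Q.I p m
      · refine ⟨m, ⟨hy, hI⟩, ?_⟩
        rintro y' ⟨hy', hI'⟩
        by_contra hne'
        exact hpo.2 y' m hy' hy hne' p ⟨hI', hI⟩
      · exfalso
        rw [dist_not_inc' Q hI] at hdy
        omega

end Main

/-- A code with minimum distance `4` is a partial ovoid or partial spread;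
it is maximal iff `ρ ≤ 3`, and an ovoid or spread iff `ρ = 2`. -/
theorem stmt4 [Finite P] [Finite L]
    (Q : GenQuad P L s t) (hs : 1 ≤ s) (ht : 1 ≤ t)
    (C : Set (P ⊕ L)) (hC2 : 2 ≤ C.ncard)
    (hδ : minDist (incGraph Q) C = 4) :
    (IsPartialOvoid Q C ∨ IsPartialSpread Q C) ∧
    ((IsMaxPartialOvoid Q C ∨ IsMaxPartialSpread Q C) ↔ covRad (incGraph Q) C ≤ 3) ∧
    ((IsOvoid Q C ∨ IsSpread Q C) ↔ covRad (incGraph Q) C = 2) := by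
  classical
  have hne : C.Nonempty := by
    rcases C.eq_empty_or_nonempty with rfl | h
    · simp at hC2
    · exact h
  have hd4 : ∀ x ∈ C, ∀ y ∈ C, x ≠ y → 4 ≤ (incGraph Q).dist x y := by
    intro x hx y hy hxy
    have h : minDist (incGraph Q) C ≤ (incGraph Q).dist x y :=
      Nat.sInf_le ⟨x, hx, y, hy, hxy, rfl⟩
    omega
  have hmix : ∀ (p : P) (ℓ : L), (incGraph Q).dist (Sum.inl p) (Sum.inr ℓ) ≤ 3 := by
    intro p ℓ
    by_cases h : Q.I p ℓ
    · rw [dist_inc' Q h]; omega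
    · rw [dist_not_inc' Q h]
  obtain ⟨x₀, hx₀⟩ := hne
  have hpure : (∀ x ∈ C, ∃ p : P, x = Sum.inl p) ∨ (∀ x ∈ C, ∃ ℓ : L, x = Sum.inr ℓ) := by
    rcases x₀ with p₀ | ℓ₀
    · left
      intro x hx
      rcases x with p | ℓ
      · exact ⟨p, rfl⟩
      · exfalso
        have h4 := hd4 _ hx₀ _ hx (by simp)
        have := hmix p₀ ℓ
        omega
    · right
      intro x hx
      rcases x with p | ℓ
      · exfalso
        have h4 := hd4 _ hx₀ _ hx (by simp)
        rw [SimpleGraph.dist_comm] at h4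
        have := hmix p ℓ₀
        omega
      · exact ⟨ℓ, rfl⟩
  rcases hpure with hP | hL
  · obtain ⟨hpo, hiff2, hiff3⟩ := main_ovoid Q hs C hC2 hd4 hP
    have hnsp : ∀ D : Set (P ⊕ L), C ⊆ D → (∀ x ∈ C, ∃ ℓ : L, x = Sum.inr ℓ) → False := by
      intro D hsub hall
      obtain ⟨p, hp⟩ := hP x₀ hx₀
      obtain ⟨ℓ, hℓ⟩ := hall x₀ hx₀
      rw [hp] at hℓ
      simp at hℓ
    refine ⟨Or.inl hpo, ?_, ?_⟩
    · constructor
      · rintro (h | h)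
        · exact hiff2.mp h
        · exact absurd (h.1.1) (fun hall => hnsp C le_rfl hall)
      · intro h; exact Or.inl (hiff2.mpr h)
    · constructor
      · rintro (h | h)
        · exact hiff3.mp h
        · exact absurd h.1 (fun hall => hnsp C le_rfl hall)
      · intro h; exact Or.inl (hiff3.mpr h)
  · obtain ⟨hpo, hiff2, hiff3⟩ := main_spread Q ht C hC2 hd4 hL
    have hnsp : (∀ x ∈ C, ∃ p : P, x = Sum.inl p) → False := by
      intro hall
      obtain ⟨ℓ, hℓ⟩ := hL x₀ hx₀
      obtain ⟨p, hp⟩ := hall x₀ hx₀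
      rw [hp] at hℓ
      simp at hℓ
    refine ⟨Or.inr hpo, ?_, ?_⟩
    · constructor
      · rintro (h | h)
        · exact absurd h.1.1 hnsp
        · exact hiff2.mp h
      · intro h; exact Or.inr (hiff2.mpr h)
    · constructor
      · rintro (h | h)
        · exact absurd h.1 hnsp
        · exact hiff3.mp h
      · intro h; exact Or.inr (hiff3.mpr h)
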